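/- arXiv:2409.13087 — 6 statements merged into one kernel-verified Lean document; each statement's English description precedes it below -/
import Mathlib

section
/- For every integer n ≥ 2, the forward increment satisfies Δ_{n+1} = D_n − (h_4(n) − h_2(n)), where Δ_{n+1} = D_{n+1} − D_n. -/
/-- The score of a binary sequence `x` of length `n` (indices `0,…,n-1`, with `true` = heads = 1
and `false` = tails = 0): the number of consecutive pairs `(1,1)` minus the number of
consecutive pairs `(1,0)`. -/
def scoreSeq (n : ℕ) (x : Fin n → Bool) : ℤ :=
  ((Finset.univ.filter fun i : Fin (n - 1) =>
      x ⟨i.val, by have := i.isLt; omega⟩ = true ∧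
      x ⟨i.val + 1, by have := i.isLt; omega⟩ = true).card : ℤ) -
  ((Finset.univ.filter fun i : Fin (n - 1) =>
      x ⟨i.val, by have := i.isLt; omega⟩ = true ∧
      x ⟨i.val + 1, by have := i.isLt; omega⟩ = false).card : ℤ)

/-- `Dn n` : the number of binary `n`-sequences with negative score minus the number
with positive score. -/
def Dn (n : ℕ) : ℤ :=
  ((Finset.univ.filter fun x : Fin n → Bool => scoreSeq n x < 0).card : ℤ) -
  ((Finset.univ.filter fun x : Fin n → Bool => 0 < scoreSeq n x).card : ℤ)

/-- `Hcnt n s` : the number of binary `n`-sequences ending in 1 (heads) with score `s`. -/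
def Hcnt (n : ℕ) (s : ℤ) : ℕ :=
  (Finset.univ.filter fun x : Fin n → Bool =>
    (∀ i : Fin n, (i : ℕ) = n - 1 → x i = true) ∧ scoreSeq n x = s).card

/-- `h2 n` : the number of binary `n`-sequences ending in 1 with score `1`
(heady close-call wins for Alice). -/
def h2 (n : ℕ) : ℕ := Hcnt n 1

/-- `h4 n` : the number of binary `n`-sequences ending in 1 with score `-1`
(heady close-call wins for Bob). -/
def h4 (n : ℕ) : ℕ := Hcnt n (-1)

lemma scoreSeq_eq_sum (n : ℕ) (x : Fin n → Bool) :
    scoreSeq n x = ∑ i : Fin (n - 1),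
      (((if x ⟨i.val, by have := i.isLt; omega⟩ = true ∧
          x ⟨i.val + 1, by have := i.isLt; omega⟩ = true then (1:ℤ) else 0)) -
       ((if x ⟨i.val, by have := i.isLt; omega⟩ = true ∧
          x ⟨i.val + 1, by have := i.isLt; omega⟩ = false then (1:ℤ) else 0))) := by
  rw [scoreSeq, Finset.sum_sub_distrib]
  simp [Finset.sum_boole]

lemma snoc_lt (m : ℕ) (y : Fin (m+2) → Bool) (b : Bool) (k : ℕ) (hk : k < m+2) :
    (Fin.snoc y b : Fin (m+3) → Bool) ⟨k, by omega⟩ = y ⟨k, hk⟩ := by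
  simp [Fin.snoc, hk]

lemma snoc_last' (m : ℕ) (y : Fin (m+2) → Bool) (b : Bool) :
    (Fin.snoc y b : Fin (m+3) → Bool) ⟨m+2, by omega⟩ = b := by
  simp [Fin.snoc]

lemma score_snoc (m : ℕ) (y : Fin (m+2) → Bool) (b : Bool) :
    scoreSeq (m+3) (Fin.snoc y b) = scoreSeq (m+2) y +
      (if y ⟨m+1, by omega⟩ = true then (if b = true then (1:ℤ) else -1) else 0) := by
  rw [scoreSeq_eq_sum, scoreSeq_eq_sum]
  have split : ∀ f : Fin (m+2) → ℤ, ∑ i : Fin ((m+3)-1), f i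
      = ∑ i : Fin (m+1), f i.castSucc + f (Fin.last (m+1)) :=
    fun f => Fin.sum_univ_castSucc f
  rw [split]
  congr 1
  · apply Finset.sum_congr rfl
    intro i _
    have h1 := snoc_lt m y b i.val (by omega)
    have h2 := snoc_lt m y b (i.val+1) (by omega)
    simp only [Fin.coe_castSucc]
    simp only [h1, h2]
  · have h1 := snoc_lt m y b (m+1) (by omega)
    have h2 := snoc_last' m y b
    show (if (Fin.snoc y b : Fin (m+3) → Bool) ⟨m+1, by omega⟩ = true ∧
          (Fin.snoc y b : Fin (m+3) → Bool) ⟨m+1+1, by omega⟩ = true then (1:ℤ) else 0) -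
         (if (Fin.snoc y b : Fin (m+3) → Bool) ⟨m+1, by omega⟩ = true ∧
          (Fin.snoc y b : Fin (m+3) → Bool) ⟨m+1+1, by omega⟩ = false then (1:ℤ) else 0) = _
    simp only [h1, h2]
    cases hy : y ⟨m+1, by omega⟩ <;> cases b <;> simp

lemma Dn_eq_sum (n : ℕ) : Dn n = ∑ x : Fin n → Bool,
    ((if scoreSeq n x < 0 then (1:ℤ) else 0) - (if 0 < scoreSeq n x then (1:ℤ) else 0)) := by
  rw [Dn, Finset.sum_sub_distrib]
  simp [Finset.sum_boole]

lemma Hcnt_eq_sum (m : ℕ) (s : ℤ) : (Hcnt (m+2) s : ℤ) = ∑ y : Fin (m+2) → Bool,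
    (if y ⟨m+1, by omega⟩ = true ∧ scoreSeq (m+2) y = s then (1:ℤ) else 0) := by
  rw [Hcnt, Finset.sum_boole]
  norm_num
  congr 1
  apply Finset.filter_congr
  intro y _
  constructor
  · rintro ⟨hL, hs⟩; exact ⟨hL ⟨m+1, by omega⟩ rfl, hs⟩
  · rintro ⟨hL, hs⟩
    refine ⟨fun i hi => ?_, hs⟩
    have : i = ⟨m+1, by omega⟩ := Fin.ext (by simpa using hi)
    rw [this]; exact hL

lemma pointwise (Lb : Bool) (s : ℤ) :
    ((if s + (if Lb = true then (if (true:Bool) = true then (1:ℤ) else -1) else 0) < 0 then (1:ℤ) else 0)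
      - (if 0 < s + (if Lb = true then (if (true:Bool) = true then (1:ℤ) else -1) else 0) then (1:ℤ) else 0))
    + ((if s + (if Lb = true then (if (false:Bool) = true then (1:ℤ) else -1) else 0) < 0 then (1:ℤ) else 0)
      - (if 0 < s + (if Lb = true then (if (false:Bool) = true then (1:ℤ) else -1) else 0) then (1:ℤ) else 0))
    = 2 * ((if s < 0 then (1:ℤ) else 0) - (if 0 < s then (1:ℤ) else 0))
      - (if Lb = true ∧ s = -1 then (1:ℤ) else 0) + (if Lb = true ∧ s = 1 then (1:ℤ) else 0) := by
  cases Lb <;> simp <;> split_ifs <;> omega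

lemma key (m : ℕ) : Dn (m+3) = 2 * Dn (m+2) - (h4 (m+2) : ℤ) + (h2 (m+2) : ℤ) := by
  rw [Dn_eq_sum (m+3)]
  rw [← Equiv.sum_comp (Fin.snocEquiv (fun _ : Fin (m+3) => Bool)) (fun x : Fin (m+3) → Bool =>
      (if scoreSeq (m+3) x < 0 then (1:ℤ) else 0) - (if 0 < scoreSeq (m+3) x then (1:ℤ) else 0))]
  rw [Fintype.sum_prod_type]
  rw [Fintype.sum_bool]
  have ee : ∀ (b : Bool) (y : Fin (m+2) → Bool),
      Fin.snocEquiv (fun _ : Fin (m+3) => Bool) (b, y) = Fin.snoc y b := by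
    intro b y; rfl
  simp only [ee]
  rw [← Finset.sum_add_distrib]
  have step : ∀ y : Fin (m+2) → Bool,
      ((if scoreSeq (m+3) (Fin.snoc y true) < 0 then (1:ℤ) else 0)
        - (if 0 < scoreSeq (m+3) (Fin.snoc y true) then (1:ℤ) else 0))
      + ((if scoreSeq (m+3) (Fin.snoc y false) < 0 then (1:ℤ) else 0)
        - (if 0 < scoreSeq (m+3) (Fin.snoc y false) then (1:ℤ) else 0))
      = 2 * ((if scoreSeq (m+2) y < 0 then (1:ℤ) else 0) - (if 0 < scoreSeq (m+2) y then (1:ℤ) else 0))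
        - (if y ⟨m+1, by omega⟩ = true ∧ scoreSeq (m+2) y = -1 then (1:ℤ) else 0)
        + (if y ⟨m+1, by omega⟩ = true ∧ scoreSeq (m+2) y = 1 then (1:ℤ) else 0) := by
    intro y
    rw [score_snoc, score_snoc]
    exact pointwise (y ⟨m+1, by omega⟩) (scoreSeq (m+2) y)
  rw [Finset.sum_congr rfl (fun y _ => step y)]
  rw [Finset.sum_add_distrib, Finset.sum_sub_distrib, ← Finset.mul_sum]
  rw [← Dn_eq_sum (m+2), h4, h2, Hcnt_eq_sum, Hcnt_eq_sum]

/-- Lemma 1: for every `n ≥ 2`, the forward increment satisfies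
`Δ_{n+1} = D_n − (h₄(n) − h₂(n))`, where `Δ_{n+1} = D_{n+1} − D_n`. -/
theorem forward_increment (n : ℕ) (hn : 2 ≤ n) :
    Dn (n + 1) - Dn n = Dn n - ((h4 n : ℤ) - (h2 n : ℤ)) := by
  obtain ⟨m, rfl⟩ : ∃ m, n = m + 2 := ⟨n - 2, by omega⟩
  have := key m
  linarith
end

section
/- For every integer n ≥ 2, h_4(n+1) = h_2(n) + h_4(n). -/
/-! ### Auxiliary development -/

/-- number of consecutive `(1,1)` pairs -/
def cA (n : ℕ) (x : Fin n → Bool) : ℕ :=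
  (Finset.univ.filter fun i : Fin (n - 1) =>
      x ⟨i.val, by have := i.isLt; omega⟩ = true ∧
      x ⟨i.val + 1, by have := i.isLt; omega⟩ = true).card

/-- number of consecutive `(1,0)` pairs -/
def cB (n : ℕ) (x : Fin n → Bool) : ℕ :=
  (Finset.univ.filter fun i : Fin (n - 1) =>
      x ⟨i.val, by have := i.isLt; omega⟩ = true ∧
      x ⟨i.val + 1, by have := i.isLt; omega⟩ = false).card

lemma scoreSeq_eq (n : ℕ) (x : Fin n → Bool) :
    scoreSeq n x = (cA n x : ℤ) - (cB n x : ℤ) := rfl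

lemma cA_eq (m : ℕ) (x : Fin (m + 1) → Bool) :
    cA (m + 1) x =
      (Finset.univ.filter fun i : Fin m => x i.castSucc = true ∧ x i.succ = true).card := rfl

lemma cB_eq (m : ℕ) (x : Fin (m + 1) → Bool) :
    cB (m + 1) x =
      (Finset.univ.filter fun i : Fin m => x i.castSucc = true ∧ x i.succ = false).card := rfl

/-- sequences of length `n` ending in `1` with `cA = a`, `cB = b` -/
def S1 (n a b : ℕ) : Finset (Fin n → Bool) :=
  Finset.univ.filter fun x =>
    (∀ i : Fin n, (i : ℕ) = n - 1 → x i = true) ∧ cA n x = a ∧ cB n x = b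

/-- sequences of length `n` ending in `0` with `cA = a`, `cB = b` -/
def S0 (n a b : ℕ) : Finset (Fin n → Bool) :=
  Finset.univ.filter fun x =>
    (∀ i : Fin n, (i : ℕ) = n - 1 → x i = false) ∧ cA n x = a ∧ cB n x = b

lemma lastTrue_iff (m : ℕ) (x : Fin (m + 1) → Bool) :
    (∀ i : Fin (m + 1), (i : ℕ) = (m + 1) - 1 → x i = true) ↔ x (Fin.last m) = true := by
  constructor
  · intro h; exact h (Fin.last m) rfl
  · intro h i hi
    have : i = Fin.last m := Fin.ext (by simpa using hi)
    rwa [this]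

lemma lastFalse_iff (m : ℕ) (x : Fin (m + 1) → Bool) :
    (∀ i : Fin (m + 1), (i : ℕ) = (m + 1) - 1 → x i = false) ↔ x (Fin.last m) = false := by
  constructor
  · intro h; exact h (Fin.last m) rfl
  · intro h i hi
    have : i = Fin.last m := Fin.ext (by simpa using hi)
    rwa [this]

lemma cA_snoc (m : ℕ) (w : Fin (m + 1) → Bool) (c : Bool) :
    cA (m + 2) (Fin.snoc w c) =
      cA (m + 1) w + (if w (Fin.last m) = true ∧ c = true then 1 else 0) := by
  rw [cA_eq, cA_eq, Finset.card_filter, Finset.card_filter, Fin.sum_univ_castSucc]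
  congr 1
  · refine Finset.sum_congr rfl fun j _ => ?_
    rw [Fin.succ_castSucc, Fin.snoc_castSucc, Fin.snoc_castSucc]
  · rw [Fin.succ_last, Fin.snoc_castSucc, Fin.snoc_last]

lemma cB_snoc (m : ℕ) (w : Fin (m + 1) → Bool) (c : Bool) :
    cB (m + 2) (Fin.snoc w c) =
      cB (m + 1) w + (if w (Fin.last m) = true ∧ c = false then 1 else 0) := by
  rw [cB_eq, cB_eq, Finset.card_filter, Finset.card_filter, Fin.sum_univ_castSucc]
  congr 1
  · refine Finset.sum_congr rfl fun j _ => ?_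
    rw [Fin.succ_castSucc, Fin.snoc_castSucc, Fin.snoc_castSucc]
  · rw [Fin.succ_last, Fin.snoc_castSucc, Fin.snoc_last]

lemma snoc_mem_S1 (m a b : ℕ) (w : Fin (m + 1) → Bool) (c : Bool) :
    Fin.snoc w c ∈ S1 (m + 2) a b ↔
      c = true ∧
      cA (m + 1) w + (if w (Fin.last m) = true ∧ c = true then 1 else 0) = a ∧
      cB (m + 1) w + (if w (Fin.last m) = true ∧ c = false then 1 else 0) = b := by
  rw [S1, Finset.mem_filter]
  rw [lastTrue_iff (m + 1) (Fin.snoc w c), Fin.snoc_last, cA_snoc, cB_snoc]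
  simp only [Finset.mem_univ, true_and]

lemma snoc_mem_S0 (m a b : ℕ) (w : Fin (m + 1) → Bool) (c : Bool) :
    Fin.snoc w c ∈ S0 (m + 2) a b ↔
      c = false ∧
      cA (m + 1) w + (if w (Fin.last m) = true ∧ c = true then 1 else 0) = a ∧
      cB (m + 1) w + (if w (Fin.last m) = true ∧ c = false then 1 else 0) = b := by
  rw [S0, Finset.mem_filter]
  rw [lastFalse_iff (m + 1) (Fin.snoc w c), Fin.snoc_last, cA_snoc, cB_snoc]
  simp only [Finset.mem_univ, true_and]

lemma snoc_inj (m : ℕ) (c : Bool) :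
    Function.Injective (fun w : Fin (m + 1) → Bool => (Fin.snoc w c : Fin (m + 2) → Bool)) := by
  intro w1 w2 h
  have := congrArg Fin.init h
  simpa [Fin.init_snoc] using this

lemma S1_S0_disjoint (m a b a' b' : ℕ) : Disjoint (S1 (m + 1) a b) (S0 (m + 1) a' b') := by
  rw [Finset.disjoint_left]
  intro x hx hx'
  rw [S1, Finset.mem_filter, lastTrue_iff] at hx
  rw [S0, Finset.mem_filter, lastFalse_iff] at hx'
  rw [hx.2.1] at hx'
  exact absurd hx'.2.1 (by simp)

lemma mem_S1_last (m a b : ℕ) (x : Fin (m + 1) → Bool) (hx : x ∈ S1 (m + 1) a b) :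
    x (Fin.last m) = true := by
  rw [S1, Finset.mem_filter, lastTrue_iff] at hx
  exact hx.2.1

lemma mem_S0_last (m a b : ℕ) (x : Fin (m + 1) → Bool) (hx : x ∈ S0 (m + 1) a b) :
    x (Fin.last m) = false := by
  rw [S0, Finset.mem_filter, lastFalse_iff] at hx
  exact hx.2.1

lemma S1_succ_card (m a b : ℕ) :
    (S1 (m + 2) (a + 1) b).card = (S1 (m + 1) a b).card + (S0 (m + 1) (a + 1) b).card := by
  have key : S1 (m + 2) (a + 1) b =
      (S1 (m + 1) a b ∪ S0 (m + 1) (a + 1) b).image (fun w => Fin.snoc w true) := by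
    ext y
    rw [Finset.mem_image]
    constructor
    · intro hy
      rw [← Fin.snoc_init_self y, snoc_mem_S1] at hy
      obtain ⟨hc, hA, hB⟩ := hy
      refine ⟨Fin.init y, ?_, by rw [← hc]; exact Fin.snoc_init_self y⟩
      rw [Finset.mem_union]
      by_cases hw : Fin.init y (Fin.last m) = true
      · left
        rw [S1, Finset.mem_filter, lastTrue_iff]
        rw [hw, hc] at hA hB
        simp only [and_self, if_true] at hA
        simp only [Bool.true_eq_false, and_false, if_false, add_zero] at hB
        exact ⟨Finset.mem_univ _, hw, by omega, hB⟩
      · right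
        rw [S0, Finset.mem_filter, lastFalse_iff]
        simp only [Bool.not_eq_true] at hw
        rw [hw] at hA hB
        simp only [Bool.false_eq_true, false_and, if_false, add_zero] at hA hB
        exact ⟨Finset.mem_univ _, hw, hA, hB⟩
    · rintro ⟨w, hw, rfl⟩
      rw [Finset.mem_union] at hw
      rw [snoc_mem_S1]
      rcases hw with hw | hw
      · have hl := mem_S1_last m a b w hw
        rw [S1, Finset.mem_filter] at hw
        rw [hl]
        simp only [and_self, if_true, Bool.true_eq_false, and_false, if_false, add_zero]
        exact ⟨by trivial, by omega, hw.2.2.2⟩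
      · have hl := mem_S0_last m (a + 1) b w hw
        rw [S0, Finset.mem_filter] at hw
        rw [hl]
        simp only [Bool.false_eq_true, false_and, if_false, add_zero]
        exact ⟨by trivial, hw.2.2.1, hw.2.2.2⟩
  rw [key, Finset.card_image_of_injective _ (snoc_inj m true),
    Finset.card_union_of_disjoint (S1_S0_disjoint m a b (a + 1) b)]

lemma S1_zero_card (m b : ℕ) :
    (S1 (m + 2) 0 b).card = (S0 (m + 1) 0 b).card := by
  have key : S1 (m + 2) 0 b = (S0 (m + 1) 0 b).image (fun w => Fin.snoc w true) := by
    ext y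
    rw [Finset.mem_image]
    constructor
    · intro hy
      rw [← Fin.snoc_init_self y, snoc_mem_S1] at hy
      obtain ⟨hc, hA, hB⟩ := hy
      refine ⟨Fin.init y, ?_, by rw [← hc]; exact Fin.snoc_init_self y⟩
      by_cases hw : Fin.init y (Fin.last m) = true
      · rw [hw, hc] at hA
        simp only [and_self, if_true] at hA
        omega
      · rw [S0, Finset.mem_filter, lastFalse_iff]
        simp only [Bool.not_eq_true] at hw
        rw [hw] at hA hB
        simp only [Bool.false_eq_true, false_and, if_false, add_zero] at hA hB
        exact ⟨Finset.mem_univ _, hw, hA, hB⟩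
    · rintro ⟨w, hw, rfl⟩
      have hl := mem_S0_last m 0 b w hw
      rw [S0, Finset.mem_filter] at hw
      rw [snoc_mem_S1, hl]
      simp only [Bool.false_eq_true, false_and, if_false, add_zero]
      exact ⟨by trivial, hw.2.2.1, hw.2.2.2⟩
  rw [key, Finset.card_image_of_injective _ (snoc_inj m true)]

lemma S0_succ_card (m a b : ℕ) :
    (S0 (m + 2) a (b + 1)).card = (S1 (m + 1) a b).card + (S0 (m + 1) a (b + 1)).card := by
  have key : S0 (m + 2) a (b + 1) =
      (S1 (m + 1) a b ∪ S0 (m + 1) a (b + 1)).image (fun w => Fin.snoc w false) := by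
    ext y
    rw [Finset.mem_image]
    constructor
    · intro hy
      rw [← Fin.snoc_init_self y, snoc_mem_S0] at hy
      obtain ⟨hc, hA, hB⟩ := hy
      refine ⟨Fin.init y, ?_, by rw [← hc]; exact Fin.snoc_init_self y⟩
      rw [Finset.mem_union]
      by_cases hw : Fin.init y (Fin.last m) = true
      · left
        rw [S1, Finset.mem_filter, lastTrue_iff]
        rw [hw, hc] at hA hB
        simp only [Bool.true_eq_false, and_false, if_false, add_zero] at hA
        simp only [and_self, if_true] at hB
        exact ⟨Finset.mem_univ _, hw, hA, by omega⟩
      · right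
        rw [S0, Finset.mem_filter, lastFalse_iff]
        simp only [Bool.not_eq_true] at hw
        rw [hw] at hA hB
        simp only [Bool.false_eq_true, false_and, if_false, add_zero] at hA hB
        exact ⟨Finset.mem_univ _, hw, hA, hB⟩
    · rintro ⟨w, hw, rfl⟩
      rw [Finset.mem_union] at hw
      rw [snoc_mem_S0]
      rcases hw with hw | hw
      · have hl := mem_S1_last m a b w hw
        rw [S1, Finset.mem_filter] at hw
        rw [hl]
        simp only [Bool.true_eq_false, and_false, if_false, add_zero, and_self, if_true]
        exact ⟨by trivial, hw.2.2.1, by omega⟩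
      · have hl := mem_S0_last m a (b + 1) w hw
        rw [S0, Finset.mem_filter] at hw
        rw [hl]
        simp only [Bool.false_eq_true, false_and, if_false, add_zero]
        exact ⟨by trivial, hw.2.2.1, hw.2.2.2⟩
  rw [key, Finset.card_image_of_injective _ (snoc_inj m false),
    Finset.card_union_of_disjoint (S1_S0_disjoint m a b a (b + 1))]

lemma S0_zero_card (m a : ℕ) :
    (S0 (m + 2) a 0).card = (S0 (m + 1) a 0).card := by
  have key : S0 (m + 2) a 0 = (S0 (m + 1) a 0).image (fun w => Fin.snoc w false) := by
    ext y
    rw [Finset.mem_image]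
    constructor
    · intro hy
      rw [← Fin.snoc_init_self y, snoc_mem_S0] at hy
      obtain ⟨hc, hA, hB⟩ := hy
      refine ⟨Fin.init y, ?_, by rw [← hc]; exact Fin.snoc_init_self y⟩
      by_cases hw : Fin.init y (Fin.last m) = true
      · rw [hw, hc] at hB
        simp only [and_self, if_true] at hB
        omega
      · rw [S0, Finset.mem_filter, lastFalse_iff]
        simp only [Bool.not_eq_true] at hw
        rw [hw] at hA hB
        simp only [Bool.false_eq_true, false_and, if_false, add_zero] at hA hB
        exact ⟨Finset.mem_univ _, hw, hA, hB⟩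
    · rintro ⟨w, hw, rfl⟩
      have hl := mem_S0_last m a 0 w hw
      rw [S0, Finset.mem_filter] at hw
      rw [snoc_mem_S0, hl]
      simp only [Bool.false_eq_true, false_and, if_false, add_zero, Bool.true_eq_false,
        and_false]
      exact ⟨by trivial, hw.2.2.1, hw.2.2.2⟩
  rw [key, Finset.card_image_of_injective _ (snoc_inj m false)]

/-- closed form for `(S1 n a b).card` -/
def F1 (n a b : ℕ) : ℕ :=
  if n ≤ a + b then 0 else (a + b).choose a * (n - 1 - a - b).choose b

/-- closed form for `(S0 n a b).card` -/
def F0 (n a b : ℕ) : ℕ :=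
  if b = 0 then (if a = 0 then 1 else 0)
  else (a + b - 1).choose (b - 1) * (n - a - b).choose b

lemma cA_one (x : Fin 1 → Bool) : cA 1 x = 0 := by
  rw [cA_eq]
  simp

lemma cB_one (x : Fin 1 → Bool) : cB 1 x = 0 := by
  rw [cB_eq]
  simp

lemma S1_one_card (a b : ℕ) : (S1 1 a b).card = F1 1 a b := by
  by_cases h : a = 0 ∧ b = 0
  · obtain ⟨rfl, rfl⟩ := h
    have e : S1 1 0 0 = {fun _ => true} := by
      ext x
      simp only [S1, Finset.mem_filter, Finset.mem_univ, true_and, cA_one, cB_one,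
        lastTrue_iff, Finset.mem_singleton, and_true]
      constructor
      · intro hx
        funext i
        have : i = Fin.last 0 := Subsingleton.elim _ _
        rw [this, hx]
      · intro hx; rw [hx]
    rw [e, Finset.card_singleton]
    unfold F1
    rw [if_neg (by omega)]
    simp
  · have e : S1 1 a b = ∅ := by
      ext x
      simp only [S1, Finset.mem_filter, Finset.mem_univ, true_and, cA_one, cB_one,
        Finset.notMem_empty, iff_false]
      rintro ⟨-, h1, h2⟩
      exact h ⟨h1.symm, h2.symm⟩
    rw [e, Finset.card_empty]
    unfold F1
    rcases le_or_gt 1 (a + b) with hab | hab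
    · rw [if_pos hab]
    · omega

lemma S0_one_card (a b : ℕ) : (S0 1 a b).card = F0 1 a b := by
  by_cases h : a = 0 ∧ b = 0
  · obtain ⟨rfl, rfl⟩ := h
    have e : S0 1 0 0 = {fun _ => false} := by
      ext x
      simp only [S0, Finset.mem_filter, Finset.mem_univ, true_and, cA_one, cB_one,
        lastFalse_iff, Finset.mem_singleton, and_true]
      constructor
      · intro hx
        funext i
        have : i = Fin.last 0 := Subsingleton.elim _ _
        rw [this, hx]
      · intro hx; rw [hx]
    rw [e, Finset.card_singleton]
    unfold F0
    simp
  · have e : S0 1 a b = ∅ := by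
      ext x
      simp only [S0, Finset.mem_filter, Finset.mem_univ, true_and, cA_one, cB_one,
        Finset.notMem_empty, iff_false]
      rintro ⟨-, h1, h2⟩
      exact h ⟨h1.symm, h2.symm⟩
    rw [e, Finset.card_empty]
    unfold F0
    rcases Nat.eq_zero_or_pos b with rfl | hb
    · rw [if_pos rfl, if_neg (by omega)]
    · rw [if_neg (show ¬(b = 0) by omega)]
      have e1 : 1 - a - b = 0 := by omega
      rw [e1, Nat.choose_eq_zero_of_lt (show 0 < b by omega), mul_zero]

lemma A1z (m b : ℕ) : F1 (m + 2) 0 b = F0 (m + 1) 0 b := by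
  unfold F1 F0
  rcases Nat.eq_zero_or_pos b with rfl | hb
  · rw [if_neg (show ¬(m + 2 ≤ 0 + 0) by omega), if_pos rfl, if_pos rfl]
    simp
  · obtain ⟨b', rfl⟩ : ∃ b', b = b' + 1 := ⟨b - 1, by omega⟩
    rw [if_neg (show ¬(b' + 1 = 0) by omega)]
    rcases le_or_gt (m + 2) (b' + 1) with h | h
    · rw [if_pos (show m + 2 ≤ 0 + (b' + 1) by omega)]
      have e1 : m + 1 - 0 - (b' + 1) = 0 := by omega
      rw [e1, Nat.choose_eq_zero_of_lt (show 0 < b' + 1 by omega), mul_zero]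
    · rw [if_neg (show ¬(m + 2 ≤ 0 + (b' + 1)) by omega)]
      have e1 : m + 2 - 1 - 0 - (b' + 1) = m + 1 - 0 - (b' + 1) := by omega
      have e2 : 0 + (b' + 1) - 1 = b' := by omega
      have e3 : (b' + 1) - 1 = b' := by omega
      rw [e1, e2, e3, Nat.choose_self]
      have e4 : (0 + (b' + 1)).choose 0 = 1 := Nat.choose_zero_right _
      rw [e4]

lemma A1s (m a b : ℕ) :
    F1 (m + 2) (a + 1) b = F1 (m + 1) a b + F0 (m + 1) (a + 1) b := by
  unfold F1 F0
  rcases le_or_gt (m + 1) (a + b) with h | h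
  · rw [if_pos (show m + 2 ≤ a + 1 + b by omega),
      if_pos (show m + 1 ≤ a + b by omega)]
    rcases Nat.eq_zero_or_pos b with rfl | hb
    · rw [if_pos rfl, if_neg (show ¬(a + 1 = 0) by omega)]
    · rw [if_neg (show ¬(b = 0) by omega)]
      have e1 : m + 1 - (a + 1) - b = 0 := by omega
      rw [e1, Nat.choose_eq_zero_of_lt (show 0 < b by omega), mul_zero, add_zero]
  · obtain ⟨k, rfl⟩ : ∃ k, m = a + b + k := ⟨m - a - b, by omega⟩
    rw [if_neg (show ¬(a + b + k + 2 ≤ a + 1 + b) by omega),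
      if_neg (show ¬(a + b + k + 1 ≤ a + b) by omega)]
    have e1 : a + b + k + 2 - 1 - (a + 1) - b = k := by omega
    have e2 : a + b + k + 1 - 1 - a - b = k := by omega
    rw [e1, e2]
    have pas : (a + 1 + b).choose (a + 1) = (a + b).choose a + (a + b).choose (a + 1) := by
      have e : a + 1 + b = (a + b) + 1 := by omega
      rw [e, Nat.choose_succ_succ]
    rw [pas, add_mul]
    congr 1
    rcases Nat.eq_zero_or_pos b with rfl | hb
    · rw [if_pos rfl, if_neg (show ¬(a + 1 = 0) by omega),
        Nat.choose_eq_zero_of_lt (show a + 0 < a + 1 by omega), zero_mul]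
    · rw [if_neg (show ¬(b = 0) by omega)]
      obtain ⟨b', rfl⟩ : ∃ b', b = b' + 1 := ⟨b - 1, by omega⟩
      have e3 : a + 1 + (b' + 1) - 1 = a + b' + 1 := by omega
      have e4 : b' + 1 - 1 = b' := by omega
      have e5 : a + (b' + 1) + k + 1 - (a + 1) - (b' + 1) = k := by omega
      rw [e3, e4, e5]
      have sym := Nat.choose_symm (show b' ≤ a + b' + 1 by omega)
      rw [show a + b' + 1 - b' = a + 1 from by omega] at sym
      rw [show a + (b' + 1) = a + b' + 1 from by omega, ← sym]

lemma A0z (m a : ℕ) : F0 (m + 2) a 0 = F0 (m + 1) a 0 := by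
  unfold F0
  rw [if_pos rfl, if_pos rfl]

lemma A0s (m a b : ℕ) :
    F0 (m + 2) a (b + 1) = F1 (m + 1) a b + F0 (m + 1) a (b + 1) := by
  unfold F1 F0
  rw [if_neg (show ¬(b + 1 = 0) by omega), if_neg (show ¬(b + 1 = 0) by omega)]
  rcases le_or_gt (m + 1) (a + b) with h | h
  · rw [if_pos (show m + 1 ≤ a + b by omega)]
    have e1 : m + 2 - a - (b + 1) = m + 1 - a - b := by omega
    have e2 : m + 1 - a - b = 0 := by omega
    have e3 : m + 1 - a - (b + 1) = 0 := by omega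
    rw [e1, e2, e3, Nat.choose_eq_zero_of_lt (show 0 < b + 1 by omega), mul_zero]
    omega
  · obtain ⟨k, rfl⟩ : ∃ k, m = a + b + k := ⟨m - a - b, by omega⟩
    rw [if_neg (show ¬(a + b + k + 1 ≤ a + b) by omega)]
    have e1 : a + b + k + 2 - a - (b + 1) = k + 1 := by omega
    have e2 : a + b + k + 1 - 1 - a - b = k := by omega
    have e3 : a + b + k + 1 - a - (b + 1) = k := by omega
    have e4 : a + (b + 1) - 1 = a + b := by omega
    have e5 : b + 1 - 1 = b := by omega
    rw [e1, e2, e3, e4, e5, Nat.choose_succ_succ, mul_add]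
    congr 1
    have sym := Nat.choose_symm (show b ≤ a + b by omega)
    rw [show a + b - b = a from by omega] at sym
    rw [sym]

lemma CF : ∀ m a b : ℕ,
    (S1 (m + 1) a b).card = F1 (m + 1) a b ∧ (S0 (m + 1) a b).card = F0 (m + 1) a b := by
  intro m
  induction m with
  | zero => exact fun a b => ⟨S1_one_card a b, S0_one_card a b⟩
  | succ m ih =>
    intro a b
    constructor
    · show (S1 (m + 2) a b).card = F1 (m + 2) a b
      match a with
      | 0 => rw [S1_zero_card, (ih 0 b).2, A1z]
      | a + 1 => rw [S1_succ_card, (ih a b).1, (ih (a + 1) b).2, A1s]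
    · show (S0 (m + 2) a b).card = F0 (m + 2) a b
      match b with
      | 0 => rw [S0_zero_card, (ih a 0).2, A0z]
      | b + 1 => rw [S0_succ_card, (ih a b).1, (ih a (b + 1)).2, A0s]

lemma S1_card (n a b : ℕ) (hn : 1 ≤ n) : (S1 n a b).card = F1 n a b := by
  obtain ⟨m, rfl⟩ : ∃ m, n = m + 1 := ⟨n - 1, by omega⟩
  exact (CF m a b).1

lemma h2_eq_sum (n : ℕ) (hn : 1 ≤ n) :
    h2 n = ∑ b ∈ Finset.range n, (S1 n (b + 1) b).card := by
  rw [h2, Hcnt]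
  rw [Finset.card_eq_sum_card_fiberwise
    (f := fun x => cB n x) (t := Finset.range n)
    (fun x _ => by
      rw [Finset.mem_coe, Finset.mem_range]
      calc cB n x ≤ (Finset.univ : Finset (Fin (n - 1))).card := Finset.card_filter_le _ _
        _ = n - 1 := by simp
        _ < n := by omega)]
  refine Finset.sum_congr rfl fun b _ => ?_
  apply congrArg Finset.card
  rw [Finset.filter_filter]
  refine Finset.ext fun x => ?_
  rw [Finset.mem_filter]
  simp only [S1, Finset.mem_filter, Finset.mem_univ, true_and, scoreSeq_eq]
  constructor
  · rintro ⟨⟨hl, hs⟩, hb⟩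
    exact ⟨hl, by omega, hb⟩
  · rintro ⟨hl, ha, hb⟩
    exact ⟨⟨hl, by omega⟩, hb⟩

lemma h4_eq_sum (n : ℕ) (hn : 1 ≤ n) :
    h4 n = ∑ a ∈ Finset.range n, (S1 n a (a + 1)).card := by
  rw [h4, Hcnt]
  rw [Finset.card_eq_sum_card_fiberwise
    (f := fun x => cA n x) (t := Finset.range n)
    (fun x _ => by
      rw [Finset.mem_coe, Finset.mem_range]
      calc cA n x ≤ (Finset.univ : Finset (Fin (n - 1))).card := Finset.card_filter_le _ _
        _ = n - 1 := by simp
        _ < n := by omega)]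
  refine Finset.sum_congr rfl fun a _ => ?_
  apply congrArg Finset.card
  rw [Finset.filter_filter]
  refine Finset.ext fun x => ?_
  rw [Finset.mem_filter]
  simp only [S1, Finset.mem_filter, Finset.mem_univ, true_and, scoreSeq_eq]
  constructor
  · rintro ⟨⟨hl, hs⟩, ha⟩
    exact ⟨hl, ha, by omega⟩
  · rintro ⟨hl, ha, hb⟩
    exact ⟨⟨hl, by omega⟩, ha⟩

lemma key_identity (n a : ℕ) :
    F1 (n + 1) a (a + 1) = F1 n (a + 1) a + F1 n a (a + 1) := by
  unfold F1
  rcases le_or_gt n (2 * a + 1) with h | h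
  · rw [if_pos (show n ≤ a + 1 + a by omega), if_pos (show n ≤ a + (a + 1) by omega)]
    rcases le_or_gt (n + 1) (a + (a + 1)) with h2 | h2
    · rw [if_pos (show n + 1 ≤ a + (a + 1) by omega)]
    · rw [if_neg (show ¬(n + 1 ≤ a + (a + 1)) by omega)]
      have e1 : n + 1 - 1 - a - (a + 1) = 0 := by omega
      rw [e1, Nat.choose_eq_zero_of_lt (show 0 < a + 1 by omega), mul_zero, add_zero]
  · obtain ⟨k, rfl⟩ : ∃ k, n = 2 * a + 2 + k := ⟨n - (2 * a + 2), by omega⟩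
    rw [if_neg (show ¬(2 * a + 2 + k + 1 ≤ a + (a + 1)) by omega),
      if_neg (show ¬(2 * a + 2 + k ≤ a + 1 + a) by omega),
      if_neg (show ¬(2 * a + 2 + k ≤ a + (a + 1)) by omega)]
    have e1 : 2 * a + 2 + k + 1 - 1 - a - (a + 1) = k + 1 := by omega
    have e2 : 2 * a + 2 + k - 1 - (a + 1) - a = k := by omega
    have e3 : 2 * a + 2 + k - 1 - a - (a + 1) = k := by omega
    rw [e1, e2, e3, Nat.choose_succ_succ, mul_add]
    congr 1
    have sym := Nat.choose_symm (show a ≤ a + (a + 1) by omega)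
    rw [show a + (a + 1) - a = a + 1 from by omega] at sym
    rw [show a + 1 + a = a + (a + 1) from by omega, sym]

/-- Lemma 2: for every `n ≥ 2`, `h₄(n+1) = h₂(n) + h₄(n)`. -/
theorem h4_succ (n : ℕ) (hn : 2 ≤ n) : h4 (n + 1) = h2 n + h4 n := by
  rw [h4_eq_sum (n + 1) (by omega), h2_eq_sum n (by omega), h4_eq_sum n (by omega)]
  have L1 : ∀ m : ℕ, 1 ≤ m → ∑ a ∈ Finset.range m, (S1 m a (a + 1)).card
      = ∑ a ∈ Finset.range m, F1 m a (a + 1) :=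
    fun m hm => Finset.sum_congr rfl fun a _ => S1_card m a (a + 1) hm
  have L2 : ∑ b ∈ Finset.range n, (S1 n (b + 1) b).card
      = ∑ b ∈ Finset.range n, F1 n (b + 1) b :=
    Finset.sum_congr rfl fun b _ => S1_card n (b + 1) b (by omega)
  rw [L1 (n + 1) (by omega), L1 n (by omega), L2]
  rw [Finset.sum_range_succ]
  have last0 : F1 (n + 1) n (n + 1) = 0 := by
    unfold F1
    rw [if_pos (by omega)]
  rw [last0, add_zero, ← Finset.sum_add_distrib]
  exact Finset.sum_congr rfl fun a _ => key_identity n a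
end

section
/- For every integer n ≥ 2, h_2(n) = Σ_{k=1}^{⌊(n+1)/3⌋} C(2k−1, k) · C(n−2k, k−1), where C denotes the binomial coefficient. -/
set_option linter.unusedTactic false
set_option linter.unreachableTactic false

/- ---------- auxiliary development ---------- -/

def pc (n : ℕ) (x : Fin n → Bool) (b : Bool) : ℕ :=
  (Finset.univ.filter fun i : Fin (n - 1) =>
      x ⟨i.val, by have := i.isLt; omega⟩ = true ∧
      x ⟨i.val + 1, by have := i.isLt; omega⟩ = b).card

lemma score_eq (n : ℕ) (x : Fin n → Bool) :
    scoreSeq n x = (pc n x true : ℤ) - (pc n x false : ℤ) := rfl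

lemma pc_succ (m : ℕ) (x : Fin (m + 1) → Bool) (b : Bool) :
    pc (m + 1) x b
      = ∑ i : Fin m, (if x ⟨i.val, by omega⟩ = true ∧ x ⟨i.val + 1, by omega⟩ = b
          then 1 else 0) := by
  rw [pc, Finset.card_filter]
  rfl

lemma snoc_mk_lt {n : ℕ} (x : Fin n → Bool) (b : Bool) (j : ℕ) (h : j < n) (h2 : j < n + 1) :
    (Fin.snoc x b : Fin (n + 1) → Bool) ⟨j, h2⟩ = x ⟨j, h⟩ := by
  have : (⟨j, h2⟩ : Fin (n + 1)) = Fin.castSucc ⟨j, h⟩ := rfl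
  rw [this, Fin.snoc_castSucc]

lemma snoc_mk_last {n : ℕ} (x : Fin n → Bool) (b : Bool) (h2 : n < n + 1) :
    (Fin.snoc x b : Fin (n + 1) → Bool) ⟨n, h2⟩ = b := by
  have : (⟨n, h2⟩ : Fin (n + 1)) = Fin.last n := rfl
  rw [this, Fin.snoc_last]

lemma pc_snoc (m : ℕ) (x : Fin (m + 1) → Bool) (b c : Bool) :
    pc (m + 2) (Fin.snoc x b) c
      = pc (m + 1) x c + (if x ⟨m, by omega⟩ = true ∧ b = c then 1 else 0) := by
  rw [pc_succ, pc_succ, Fin.sum_univ_castSucc]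
  congr 1
  · apply Finset.sum_congr rfl
    intro j _
    simp only [Fin.coe_castSucc]
    simp only [snoc_mk_lt x b j.val (by omega) (by omega),
        snoc_mk_lt x b (j.val + 1) (by omega) (by omega)]
  · simp only [Fin.val_last]
    simp only [snoc_mk_lt x b m (by omega) (by omega), snoc_mk_last x b (by omega)]

lemma pc_one (x : Fin 1 → Bool) (b : Bool) : pc 1 x b = 0 := by
  rw [pc_succ]
  simp

lemma pc_le (m : ℕ) (x : Fin (m + 1) → Bool) (b : Bool) : pc (m + 1) x b ≤ m := by
  calc pc (m + 1) x b ≤ (Finset.univ : Finset (Fin (m + 1 - 1))).card :=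
        Finset.card_filter_le _ _
    _ = m := by simp

def Acnt (n u d : ℕ) : ℕ :=
  (Finset.univ.filter fun x : Fin n → Bool =>
    (∀ i : Fin n, (i : ℕ) = n - 1 → x i = true) ∧ pc n x true = u ∧ pc n x false = d).card

def Bcnt (n u d : ℕ) : ℕ :=
  (Finset.univ.filter fun x : Fin n → Bool =>
    (∀ i : Fin n, (i : ℕ) = n - 1 → x i = false) ∧ pc n x true = u ∧ pc n x false = d).card

lemma ends_iff (m : ℕ) (x : Fin (m + 1) → Bool) (c : Bool) :
    (∀ i : Fin (m + 1), (i : ℕ) = m → x i = c) ↔ x ⟨m, by omega⟩ = c := by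
  constructor
  · intro h; exact h ⟨m, by omega⟩ rfl
  · intro h i hi
    have : i = ⟨m, by omega⟩ := Fin.ext (by simpa using hi)
    rw [this]; exact h

lemma card_filter_snoc (m : ℕ) (p : (Fin (m + 2) → Bool) → Prop) [DecidablePred p] :
    (Finset.univ.filter p).card
      = ∑ y : Fin (m + 1) → Bool,
          ((if p (Fin.snoc y true) then 1 else 0) + (if p (Fin.snoc y false) then 1 else 0)) := by
  rw [Finset.card_filter]
  rw [← Equiv.sum_comp (Fin.snocEquiv (fun _ => Bool)) (fun x => if p x then 1 else 0)]
  rw [Fintype.sum_prod_type]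
  rw [Fintype.sum_bool]
  rw [← Finset.sum_add_distrib]
  apply Finset.sum_congr rfl
  intro y _
  simp [Fin.snocEquiv]
  rfl

lemma A_recS (m u d : ℕ) :
    Acnt (m + 2) (u + 1) d = Acnt (m + 1) u d + Bcnt (m + 1) (u + 1) d := by
  rw [Acnt, card_filter_snoc, Acnt, Bcnt, Finset.card_filter, Finset.card_filter,
    ← Finset.sum_add_distrib]
  apply Finset.sum_congr rfl
  intro y _
  simp only [show m + 2 - 1 = m + 1 from rfl, show m + 1 - 1 = m from rfl]
  simp only [ends_iff, snoc_mk_last, pc_snoc]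
  by_cases hy : y ⟨m, by omega⟩ = true
  · simp only [hy]
    simp only [true_and, and_true, Bool.true_eq_false, false_and, if_false, if_true,
      Bool.false_eq_true, and_false, eq_self_iff_true]
    first
    | rfl
    | (simp; try (split_ifs <;> omega))
    | (split_ifs <;> omega)
  · simp only [hy]
    simp only [Bool.not_eq_true] at hy
    simp only [hy, true_and, and_true, Bool.true_eq_false, Bool.false_eq_true, false_and,
      if_false, if_true, and_false, eq_self_iff_true]
    first
    | rfl
    | (simp; try (split_ifs <;> omega))
    | (split_ifs <;> omega)

lemma A_rec0 (m d : ℕ) :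
    Acnt (m + 2) 0 d = Bcnt (m + 1) 0 d := by
  rw [Acnt, card_filter_snoc, Bcnt, Finset.card_filter]
  apply Finset.sum_congr rfl
  intro y _
  simp only [show m + 2 - 1 = m + 1 from rfl, show m + 1 - 1 = m from rfl]
  simp only [ends_iff, snoc_mk_last, pc_snoc]
  by_cases hy : y ⟨m, by omega⟩ = true
  · simp only [hy]
    simp only [true_and, and_true, Bool.true_eq_false, false_and, if_false, if_true,
      Bool.false_eq_true, and_false, eq_self_iff_true]
    first
    | rfl
    | (simp; try (split_ifs <;> omega))
    | (split_ifs <;> omega)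
  · simp only [hy]
    simp only [Bool.not_eq_true] at hy
    simp only [hy, true_and, and_true, Bool.true_eq_false, Bool.false_eq_true, false_and,
      if_false, if_true, and_false, eq_self_iff_true]
    first
    | rfl
    | (simp; try (split_ifs <;> omega))
    | (split_ifs <;> omega)

lemma B_rec0 (m u : ℕ) :
    Bcnt (m + 2) u 0 = Bcnt (m + 1) u 0 := by
  rw [Bcnt, card_filter_snoc, Bcnt, Finset.card_filter]
  apply Finset.sum_congr rfl
  intro y _
  simp only [show m + 2 - 1 = m + 1 from rfl, show m + 1 - 1 = m from rfl]
  simp only [ends_iff, snoc_mk_last, pc_snoc]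
  by_cases hy : y ⟨m, by omega⟩ = true
  · simp only [hy]
    simp only [true_and, and_true, Bool.true_eq_false, false_and, if_false, if_true,
      Bool.false_eq_true, and_false, eq_self_iff_true]
    first
    | rfl
    | (simp; try (split_ifs <;> omega))
    | (split_ifs <;> omega)
  · simp only [hy]
    simp only [Bool.not_eq_true] at hy
    simp only [hy, true_and, and_true, Bool.true_eq_false, Bool.false_eq_true, false_and,
      if_false, if_true, and_false, eq_self_iff_true]
    first
    | rfl
    | (simp; try (split_ifs <;> omega))
    | (split_ifs <;> omega)

lemma B_recS (m u d : ℕ) :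
    Bcnt (m + 2) u (d + 1) = Acnt (m + 1) u d + Bcnt (m + 1) u (d + 1) := by
  rw [Bcnt, card_filter_snoc, Acnt, Bcnt, Finset.card_filter, Finset.card_filter,
    ← Finset.sum_add_distrib]
  apply Finset.sum_congr rfl
  intro y _
  simp only [show m + 2 - 1 = m + 1 from rfl, show m + 1 - 1 = m from rfl]
  simp only [ends_iff, snoc_mk_last, pc_snoc]
  by_cases hy : y ⟨m, by omega⟩ = true
  · simp only [hy]
    simp only [true_and, and_true, Bool.true_eq_false, false_and, if_false, if_true,
      Bool.false_eq_true, and_false, eq_self_iff_true]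
    first
    | rfl
    | (simp; try (split_ifs <;> omega))
    | (split_ifs <;> omega)
  · simp only [hy]
    simp only [Bool.not_eq_true] at hy
    simp only [hy, true_and, and_true, Bool.true_eq_false, Bool.false_eq_true, false_and,
      if_false, if_true, and_false, eq_self_iff_true]
    first
    | rfl
    | (simp; try (split_ifs <;> omega))
    | (split_ifs <;> omega)

/- closed formulas -/

def Af (n u d : ℕ) : ℕ :=
  if u + d < n then Nat.choose (u + d) d * Nat.choose (n - 1 - u - d) d else 0

def Bf (n u d : ℕ) : ℕ :=
  if d = 0 then (if u = 0 then 1 else 0)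
  else Nat.choose (u + d - 1) (d - 1) * Nat.choose (n - u - d) d

lemma Af_step0 (m d : ℕ) : Af (m + 2) 0 d = Bf (m + 1) 0 d := by
  rcases d with _ | d
  · simp [Af, Bf]
  · rw [Af, Bf, if_neg (Nat.succ_ne_zero d)]
    simp only [Nat.zero_add]
    have e2 : m + 2 - 1 - 0 - (d + 1) = m - d := by omega
    have e4 : d + 1 - 1 = d := by omega
    have e5 : m + 1 - 0 - (d + 1) = m - d := by omega
    rw [e2, e4, e5, Nat.choose_self, Nat.choose_self, one_mul]
    by_cases h : d + 1 < m + 2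
    · rw [if_pos h]
    · rw [if_neg h]
      have : m - d = 0 := by omega
      rw [this, Nat.choose_eq_zero_of_lt (Nat.succ_pos d)]

lemma Af_stepS (m u d : ℕ) :
    Af (m + 2) (u + 1) d = Af (m + 1) u d + Bf (m + 1) (u + 1) d := by
  have hne : u + 1 ≠ 0 := Nat.succ_ne_zero u
  rcases d with _ | d
  · have hB : Bf (m + 1) (u + 1) 0 = 0 := by simp [Bf]
    rw [hB, Af, Af, Nat.add_zero]
    simp only [Nat.add_zero, Nat.choose_zero_right, one_mul]
    by_cases h : u < m + 1
    · rw [if_pos (by omega), if_pos h]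
    · rw [if_neg (by omega), if_neg (by omega)]
  · rw [Af, Af, Bf, if_neg (Nat.succ_ne_zero d)]
    have e1 : u + 1 + (d + 1) - 1 = u + d + 1 := by omega
    have e2 : d + 1 - 1 = d := by omega
    have e3 : m + 1 - (u + 1) - (d + 1) = m - u - d - 1 := by omega
    have e4 : m + 2 - 1 - (u + 1) - (d + 1) = m - u - d - 1 := by omega
    have e5 : m + 1 - 1 - u - (d + 1) = m - u - d - 1 := by omega
    have e6 : u + 1 + (d + 1) = (u + d + 1) + 1 := by omega
    rw [e1, e2, e3, e4, e5, e6]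
    by_cases h : u + (d + 1) < m + 1
    · rw [if_pos (by omega), if_pos h]
      have e7 : u + (d + 1) = u + d + 1 := by omega
      rw [e7, Nat.choose_succ_succ' (u + d + 1) d]
      ring
    · rw [if_neg (by omega), if_neg h, Nat.zero_add]
      have : m - u - d - 1 = 0 := by omega
      rw [this, Nat.choose_eq_zero_of_lt (Nat.succ_pos d), Nat.mul_zero]

lemma Bf_step0 (m u : ℕ) : Bf (m + 2) u 0 = Bf (m + 1) u 0 := rfl

lemma Bf_stepS (m u d : ℕ) :
    Bf (m + 2) u (d + 1) = Af (m + 1) u d + Bf (m + 1) u (d + 1) := by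
  rw [Bf, Bf, Af, if_neg (Nat.succ_ne_zero d), if_neg (Nat.succ_ne_zero d)]
  have e1 : u + (d + 1) - 1 = u + d := by omega
  have e2 : d + 1 - 1 = d := by omega
  have e3 : m + 1 - 1 - u - d = m - u - d := by omega
  rw [e1, e2, e3]
  by_cases h : u + d < m + 1
  · rw [if_pos h]
    have e4 : m + 2 - u - (d + 1) = (m - u - d) + 1 := by omega
    have e5 : m + 1 - u - (d + 1) = m - u - d := by omega
    rw [e4, e5, Nat.choose_succ_succ' (m - u - d) d]
    ring
  · rw [if_neg h, Nat.zero_add]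
    have e4 : m + 2 - u - (d + 1) = 0 := by omega
    have e5 : m + 1 - u - (d + 1) = 0 := by omega
    rw [e4, e5]

/- base cases -/

lemma Acnt_one (u d : ℕ) : Acnt 1 u d = if u = 0 ∧ d = 0 then 1 else 0 := by
  rw [Acnt]
  by_cases h : u = 0 ∧ d = 0
  · obtain ⟨rfl, rfl⟩ := h
    rw [if_pos ⟨rfl, rfl⟩]
    decide
  · rw [if_neg h, Finset.card_eq_zero, Finset.filter_eq_empty_iff]
    intro x _
    simp only [pc_one]
    rintro ⟨-, h1, h2⟩
    exact h ⟨h1.symm, h2.symm⟩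

lemma Bcnt_one (u d : ℕ) : Bcnt 1 u d = if u = 0 ∧ d = 0 then 1 else 0 := by
  rw [Bcnt]
  by_cases h : u = 0 ∧ d = 0
  · obtain ⟨rfl, rfl⟩ := h
    rw [if_pos ⟨rfl, rfl⟩]
    decide
  · rw [if_neg h, Finset.card_eq_zero, Finset.filter_eq_empty_iff]
    intro x _
    simp only [pc_one]
    rintro ⟨-, h1, h2⟩
    exact h ⟨h1.symm, h2.symm⟩

lemma Af_one (u d : ℕ) : Af 1 u d = if u = 0 ∧ d = 0 then 1 else 0 := by
  rw [Af]
  by_cases h : u = 0 ∧ d = 0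
  · obtain ⟨rfl, rfl⟩ := h
    simp
  · rw [if_neg h, if_neg (by omega)]

lemma Bf_one (u d : ℕ) : Bf 1 u d = if u = 0 ∧ d = 0 then 1 else 0 := by
  rw [Bf]
  rcases d with _ | d
  · by_cases h : u = 0
    · simp [h]
    · simp [h]
  · rw [if_neg (Nat.succ_ne_zero d), if_neg (by omega)]
    have : 1 - u - (d + 1) = 0 := by omega
    rw [this, Nat.choose_eq_zero_of_lt (Nat.succ_pos d), Nat.mul_zero]

/- master induction -/

lemma AB_formula (m : ℕ) : ∀ u d : ℕ,
    Acnt (m + 1) u d = Af (m + 1) u d ∧ Bcnt (m + 1) u d = Bf (m + 1) u d := by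
  induction m with
  | zero =>
    intro u d
    exact ⟨by rw [Acnt_one, Af_one], by rw [Bcnt_one, Bf_one]⟩
  | succ m ih =>
    intro u d
    constructor
    · rcases u with _ | u
      · rw [A_rec0, (ih 0 d).2, Af_step0]
      · rw [A_recS, (ih u d).1, (ih (u + 1) d).2, Af_stepS]
    · rcases d with _ | d
      · rw [B_rec0, (ih u 0).2, Bf_step0]
      · rw [B_recS, (ih u d).1, (ih u (d + 1)).2, Bf_stepS]

/- partition of Hcnt -/

lemma Hcnt_eq (m : ℕ) :
    Hcnt (m + 1) 1 = ∑ d ∈ Finset.range (m + 1), Acnt (m + 1) (d + 1) d := by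
  rw [Hcnt]
  rw [Finset.card_eq_sum_card_fiberwise
      (f := fun x : Fin (m + 1) → Bool => pc (m + 1) x false)
      (t := Finset.range (m + 1))
      (fun x _ => Finset.mem_range.2 (Nat.lt_succ_of_le (pc_le m x false)))]
  apply Finset.sum_congr rfl
  intro d _
  rw [Acnt]
  congr 1
  rw [Finset.filter_filter]
  apply Finset.filter_congr
  intro x _
  rw [score_eq]
  constructor
  · rintro ⟨⟨he, hs⟩, hd⟩
    exact ⟨he, by omega, hd⟩
  · rintro ⟨he, hu, hd⟩
    exact ⟨⟨he, by omega⟩, hd⟩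

/- final assembly -/

lemma Af_val (m k : ℕ) (hk : 1 ≤ k) :
    Af (m + 1) k (k - 1)
      = (if 3 * k ≤ m + 2 then Nat.choose (2 * k - 1) k * Nat.choose (m + 1 - 2 * k) (k - 1)
        else 0) := by
  obtain ⟨j, rfl⟩ : ∃ j, k = j + 1 := ⟨k - 1, by omega⟩
  rw [Af]
  have e1 : j + 1 + (j + 1 - 1) = 2 * j + 1 := by omega
  have e2 : j + 1 - 1 = j := by omega
  have e3 : m + 1 - 1 - (j + 1) - j = m - 2 * j - 1 := by omega
  have e4 : 2 * (j + 1) - 1 = 2 * j + 1 := by omega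
  have e5 : m + 1 - 2 * (j + 1) = m - 2 * j - 1 := by omega
  rw [e1, e2, e3, e4, e5]
  by_cases h : 3 * (j + 1) ≤ m + 2
  · rw [if_pos h, if_pos (by omega)]
    congr 1
    have : 2 * j + 1 - (j + 1) = j := by omega
    calc (2 * j + 1).choose j = (2 * j + 1).choose (2 * j + 1 - (j + 1)) := by rw [this]
      _ = (2 * j + 1).choose (j + 1) := Nat.choose_symm (by omega)
  · rw [if_neg h]
    by_cases h2 : 2 * j + 1 < m + 1
    · rw [if_pos h2, Nat.choose_eq_zero_of_lt (show m - 2 * j - 1 < j by omega), Nat.mul_zero]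
    · rw [if_neg h2]

/-- Corollary to Lemma 2: for every `n ≥ 2`,
`h₂(n) = ∑_{k=1}^{⌊(n+1)/3⌋} C(2k−1, k) · C(n−2k, k−1)`. -/
theorem h2_formula (n : ℕ) (hn : 2 ≤ n) :
    h2 n = ∑ k ∈ Finset.Icc 1 ((n + 1) / 3),
      Nat.choose (2 * k - 1) k * Nat.choose (n - 2 * k) (k - 1) := by
  obtain ⟨m, rfl⟩ : ∃ m, n = m + 1 := ⟨n - 1, by omega⟩
  rw [h2, Hcnt_eq m]
  have step1 : (∑ d ∈ Finset.range (m + 1), Acnt (m + 1) (d + 1) d)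
      = ∑ k ∈ Finset.Icc 1 (m + 1),
          (if 3 * k ≤ m + 2 then Nat.choose (2 * k - 1) k * Nat.choose (m + 1 - 2 * k) (k - 1)
            else 0) := by
    refine Finset.sum_nbij' (fun d => d + 1) (fun k => k - 1) ?_ ?_ ?_ ?_ ?_
    · intro d hd
      rw [Finset.mem_range] at hd
      rw [Finset.mem_Icc]
      omega
    · intro k hk
      rw [Finset.mem_Icc] at hk
      rw [Finset.mem_range]
      omega
    · intro d _; omega
    · intro k hk; rw [Finset.mem_Icc] at hk; omega
    · intro d _
      rw [← Af_val m (d + 1) (by omega), show d + 1 - 1 = d from rfl,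
        (AB_formula m (d + 1) d).1]
  rw [step1]
  have hsub : Finset.Icc 1 ((m + 1 + 1) / 3) ⊆ Finset.Icc 1 (m + 1) :=
    Finset.Icc_subset_Icc_right (by omega)
  have hvan : ∀ k ∈ Finset.Icc 1 (m + 1), k ∉ Finset.Icc 1 ((m + 1 + 1) / 3) →
      (if 3 * k ≤ m + 2 then Nat.choose (2 * k - 1) k * Nat.choose (m + 1 - 2 * k) (k - 1)
        else 0) = 0 := by
    intro k hk hk2
    rw [Finset.mem_Icc] at hk
    rw [Finset.mem_Icc, not_and_or] at hk2
    rw [if_neg (by omega)]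
  rw [← Finset.sum_subset hsub hvan]
  apply Finset.sum_congr rfl
  intro k hk
  rw [Finset.mem_Icc] at hk
  rw [if_pos (by omega)]
end

section
/- Let n ≥ 1 and let s be an integer with −⌊n/2⌋ ≤ s ≤ max(0, n−3). Then T_s(n) = [s = 0] + Σ_{k = max(1, −s)}^{⌊(n−s)/3⌋} C(2k+s−1, k−1) · C(n−s−2k, k), where [s = 0] is 1 if s = 0 and 0 otherwise, and C denotes the binomial coefficient. -/
/-- `Tcnt n s` : the number of binary `n`-sequences ending in 0 (tails) with score `s`. -/
def Tcnt (n : ℕ) (s : ℤ) : ℕ :=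
  (Finset.univ.filter fun x : Fin n → Bool =>
    (∀ i : Fin n, (i : ℕ) = n - 1 → x i = false) ∧ scoreSeq n x = s).card



/-- `Ucnt n s` : the number of binary `n`-sequences ending in 1 (heads) with score `s`. -/
def Ucnt (n : ℕ) (s : ℤ) : ℕ :=
  (Finset.univ.filter fun x : Fin n → Bool =>
    (∀ i : Fin n, (i : ℕ) = n - 1 → x i = true) ∧ scoreSeq n x = s).card

def ext2 (n : ℕ) (y : Fin (n+1) → Bool) (b : Bool) : Fin (n+2) → Bool :=
  fun j => if h : j.val < n + 1 then y ⟨j.val, h⟩ else b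


lemma cnt_ext (n : ℕ) (y : Fin (n+1) → Bool) (b c : Bool) :
    (Finset.univ.filter fun i : Fin (n+1) =>
      ext2 n y b ⟨i.val, by have := i.isLt; omega⟩ = true ∧
      ext2 n y b ⟨i.val + 1, by have := i.isLt; omega⟩ = c).card =
    (Finset.univ.filter fun i : Fin n =>
      y ⟨i.val, by have := i.isLt; omega⟩ = true ∧
      y ⟨i.val + 1, by have := i.isLt; omega⟩ = c).card
    + (if y (Fin.last n) = true ∧ b = c then 1 else 0) := by
  rw [Finset.card_filter, Finset.card_filter, Fin.sum_univ_castSucc]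
  congr 1
  · apply Finset.sum_congr rfl
    intro i _
    simp only [ext2, Fin.castSucc, Fin.castAdd, Fin.castLE]
    rw [dif_pos (show (i:ℕ) < n+1 by omega), dif_pos (show (i:ℕ)+1 < n+1 by omega)]
  · simp only [ext2, Fin.last]
    rw [dif_pos (show n < n+1 by omega), dif_neg (show ¬(n + 1 < n+1) by omega)]

lemma scoreSeq_succ (n : ℕ) (x : Fin (n+2) → Bool) :
    scoreSeq (n+2) x =
      ((Finset.univ.filter fun i : Fin (n+1) =>
        x ⟨i.val, by have := i.isLt; omega⟩ = true ∧
        x ⟨i.val + 1, by have := i.isLt; omega⟩ = true).card : ℤ) -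
      ((Finset.univ.filter fun i : Fin (n+1) =>
        x ⟨i.val, by have := i.isLt; omega⟩ = true ∧
        x ⟨i.val + 1, by have := i.isLt; omega⟩ = false).card : ℤ) := rfl

lemma score_ext (n : ℕ) (y : Fin (n+1) → Bool) (b : Bool) :
    scoreSeq (n+2) (ext2 n y b) =
      scoreSeq (n+1) y + (if y (Fin.last n) = true then (if b = true then 1 else -1) else 0) := by
  rw [scoreSeq_succ, cnt_ext, cnt_ext]
  have : scoreSeq (n+1) y =
      ((Finset.univ.filter fun i : Fin n =>
        y ⟨i.val, by have := i.isLt; omega⟩ = true ∧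
        y ⟨i.val + 1, by have := i.isLt; omega⟩ = true).card : ℤ) -
      ((Finset.univ.filter fun i : Fin n =>
        y ⟨i.val, by have := i.isLt; omega⟩ = true ∧
        y ⟨i.val + 1, by have := i.isLt; omega⟩ = false).card : ℤ) := rfl
  rw [this]
  rcases hb : b <;> rcases hy : y (Fin.last n) <;> simp <;> ring


lemma end_iff (n : ℕ) (x : Fin (n+1) → Bool) (c : Bool) :
    (∀ i : Fin (n+1), (i : ℕ) = (n+1) - 1 → x i = c) ↔ x (Fin.last n) = c := by
  constructor
  · intro h; exact h (Fin.last n) (by simp)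
  · intro h i hi
    have : i = Fin.last n := by
      apply Fin.ext; simpa using hi
    rw [this]; exact h

lemma ext2_last (n : ℕ) (y : Fin (n+1) → Bool) (b : Bool) :
    ext2 n y b (Fin.last (n+1)) = b := by
  simp [ext2, Fin.last]

lemma ext2_castSucc (n : ℕ) (y : Fin (n+1) → Bool) (b : Bool) (j : Fin (n+1)) :
    ext2 n y b ⟨j.val, by have := j.isLt; omega⟩ = y j := by
  simp [ext2, j.isLt]

lemma cnt_bij (n : ℕ) (s : ℤ) (c : Bool) :
    (Finset.univ.filter fun x : Fin (n+2) → Bool =>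
      (∀ i : Fin (n+2), (i : ℕ) = (n+2) - 1 → x i = c) ∧ scoreSeq (n+2) x = s).card =
    (Finset.univ.filter fun y : Fin (n+1) → Bool =>
      scoreSeq (n+2) (ext2 n y c) = s).card := by
  apply Finset.card_bij (fun x _ => fun j : Fin (n+1) => x ⟨j.val, by have := j.isLt; omega⟩)
  · intro x hx
    simp only [Finset.mem_filter, Finset.mem_univ, true_and] at hx ⊢
    have hend : x (Fin.last (n+1)) = c := (end_iff (n+1) x c).1 hx.1
    have hx2 : ext2 n (fun j : Fin (n+1) => x ⟨j.val, by have := j.isLt; omega⟩) c = x := by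
      funext j
      by_cases h : j.val < n + 1
      · simp [ext2, h]
      · have : j = Fin.last (n+1) := by apply Fin.ext; have := j.isLt; simp [Fin.last]; omega
        rw [this]; rw [ext2_last]
        exact hend.symm
    rw [hx2]; exact hx.2
  · intro x hx x' hx' h
    simp only [Finset.mem_filter, Finset.mem_univ, true_and] at hx hx'
    funext j
    by_cases hj : j.val < n + 1
    · have := congrFun h ⟨j.val, hj⟩
      simpa using this
    · have hjl : j = Fin.last (n+1) := by apply Fin.ext; have := j.isLt; simp [Fin.last]; omega
      rw [hjl, (end_iff (n+1) x c).1 hx.1, (end_iff (n+1) x' c).1 hx'.1]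
  · intro y hy
    simp only [Finset.mem_filter, Finset.mem_univ, true_and] at hy
    refine ⟨ext2 n y c, ?_, ?_⟩
    · simp only [Finset.mem_filter, Finset.mem_univ, true_and]
      refine ⟨(end_iff (n+1) _ c).2 (ext2_last n y c), hy⟩
    · funext j
      exact ext2_castSucc n y c j


lemma cnt_split (n : ℕ) (s : ℤ) (c : Bool) :
    (Finset.univ.filter fun y : Fin (n+1) → Bool =>
      scoreSeq (n+2) (ext2 n y c) = s).card =
    Tcnt (n+1) (if c then s else s) + Ucnt (n+1) (if c then s - 1 else s + 1) := by
  rw [← Finset.card_filter_add_card_filter_not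
    (p := fun y : Fin (n+1) → Bool => y (Fin.last n) = false), Finset.filter_filter,
    Finset.filter_filter]
  congr 1
  · unfold Tcnt
    congr 1
    ext y
    simp only [Finset.mem_filter, Finset.mem_univ, true_and, score_ext, end_iff]
    rcases hy : y (Fin.last n) <;> rcases c <;> simp <;> omega
  · unfold Ucnt
    congr 1
    ext y
    simp only [Finset.mem_filter, Finset.mem_univ, true_and, score_ext, end_iff]
    rcases hy : y (Fin.last n) <;> rcases c <;> simp <;> omega

lemma Tcnt_rec (n : ℕ) (s : ℤ) :
    Tcnt (n+2) s = Tcnt (n+1) s + Ucnt (n+1) (s+1) := by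
  have := (cnt_bij n s false).trans (cnt_split n s false)
  simpa [Tcnt] using this

lemma Ucnt_rec (n : ℕ) (s : ℤ) :
    Ucnt (n+2) s = Tcnt (n+1) s + Ucnt (n+1) (s-1) := by
  have := (cnt_bij n s true).trans (cnt_split n s true)
  simpa [Ucnt] using this


lemma scoreSeq_one (x : Fin 1 → Bool) : scoreSeq 1 x = 0 := by
  simp [scoreSeq]

lemma Tcnt_one (s : ℤ) : Tcnt 1 s = if s = 0 then 1 else 0 := by
  unfold Tcnt
  rcases eq_or_ne s 0 with h | h
  · subst h
    rw [if_pos rfl]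
    rw [Finset.card_eq_one]
    refine ⟨fun _ => false, ?_⟩
    ext x
    simp only [Finset.mem_filter, Finset.mem_univ, true_and, Finset.mem_singleton,
      scoreSeq_one]
    constructor
    · rintro ⟨h1, -⟩
      funext i
      have : (i : ℕ) = 0 := by omega
      exact h1 i this
    · rintro rfl
      exact ⟨fun _ _ => rfl, trivial⟩
  · rw [if_neg h, Finset.card_eq_zero]
    ext x
    simp [scoreSeq_one, Ne.symm h]

lemma Ucnt_one (s : ℤ) : Ucnt 1 s = if s = 0 then 1 else 0 := by
  unfold Ucnt
  rcases eq_or_ne s 0 with h | h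
  · subst h
    rw [if_pos rfl]
    rw [Finset.card_eq_one]
    refine ⟨fun _ => true, ?_⟩
    ext x
    simp only [Finset.mem_filter, Finset.mem_univ, true_and, Finset.mem_singleton,
      scoreSeq_one]
    constructor
    · rintro ⟨h1, -⟩
      funext i
      have : (i : ℕ) = 0 := by omega
      exact h1 i this
    · rintro rfl
      exact ⟨fun _ _ => rfl, trivial⟩
  · rw [if_neg h, Finset.card_eq_zero]
    ext x
    simp [scoreSeq_one, Ne.symm h]


def tT (n : ℕ) (s : ℤ) (k : ℕ) : ℕ :=
  if 1 ≤ k ∧ -s ≤ (k:ℤ) ∧ s + 2*(k:ℤ) ≤ (n:ℤ) then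
    (2*(k:ℤ) + s - 1).toNat.choose (k-1) * (((n:ℤ) - s).toNat - 2*k).choose k
  else 0

def tU (n : ℕ) (s : ℤ) (k : ℕ) : ℕ :=
  if 1 ≤ k ∧ 1 - s ≤ (k:ℤ) ∧ s + 2*(k:ℤ) - 1 ≤ (n:ℤ) then
    (s + 2*(k:ℤ) - 2).toNat.choose (k-1) * (((n:ℤ) + 1 - s).toNat - 2*k).choose (k-1)
  else 0

lemma tT_vanish (n : ℕ) (s : ℤ) (k : ℕ) (h : n < k) : tT n s k = 0 := by
  unfold tT; rw [if_neg]; rintro ⟨h1, h2, h3⟩; omega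

lemma tU_vanish (n : ℕ) (s : ℤ) (k : ℕ) (h : n < k) : tU n s k = 0 := by
  unfold tU; rw [if_neg]; rintro ⟨h1, h2, h3⟩; omega

lemma I1 (n : ℕ) (s : ℤ) (k : ℕ) : tT (n+1) s k = tT n s k + tU n (s+1) k := by
  unfold tT tU
  rcases Nat.eq_zero_or_pos k with rfl | hk
  · rw [if_neg (by rintro ⟨h, -, -⟩; omega), if_neg (by rintro ⟨h, -, -⟩; omega),
      if_neg (by rintro ⟨h, -, -⟩; omega)]
  obtain ⟨j, rfl⟩ : ∃ j, k = j + 1 := ⟨k - 1, by omega⟩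
  by_cases hs : -s ≤ ((j:ℤ) + 1)
  · by_cases hn : s + 2*((j:ℤ)+1) ≤ (n:ℤ)
    · rw [if_pos ⟨by omega, by push_cast; omega, by push_cast; omega⟩,
        if_pos ⟨by omega, by push_cast; omega, by push_cast; omega⟩,
        if_pos ⟨by omega, by push_cast; omega, by push_cast; omega⟩]
      rw [show j + 1 - 1 = j from rfl]
      push_cast
      have e2 : (s + 1 + 2*((j:ℤ)+1) - 2) = 2*((j:ℤ)+1) + s - 1 := by ring
      have e3 : ((n:ℤ) + 1 - (s+1)) = (n:ℤ) - s := by ring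
      rw [e2, e3]
      have e1 : ((n:ℤ) + 1 - s).toNat - 2*(j+1) = (((n:ℤ) - s).toNat - 2*(j+1)) + 1 := by
        omega
      rw [e1, Nat.choose_succ_succ]
      ring
    · by_cases hn1 : s + 2*((j:ℤ)+1) ≤ (n:ℤ) + 1
      · rw [if_pos ⟨by omega, by push_cast; omega, by push_cast; omega⟩,
          if_neg (by rintro ⟨-, -, h⟩; push_cast at h; omega),
          if_neg (by rintro ⟨-, -, h⟩; push_cast at h; omega)]
        have e : ((((n:ℕ)+1:ℕ):ℤ) - s).toNat - 2*(j+1) = 0 := by omega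
        rw [e]
        simp [Nat.choose_eq_zero_of_lt]
      · rw [if_neg (by rintro ⟨-, -, h⟩; push_cast at h; omega),
          if_neg (by rintro ⟨-, -, h⟩; push_cast at h; omega),
          if_neg (by rintro ⟨-, -, h⟩; push_cast at h; omega)]
  · rw [if_neg (by rintro ⟨-, h, -⟩; push_cast at h; omega),
      if_neg (by rintro ⟨-, h, -⟩; push_cast at h; omega),
      if_neg (by rintro ⟨-, h, -⟩; push_cast at h; omega)]

lemma I2a (n : ℕ) (s : ℤ) : tU (n+1) s 1 = tU n (s-1) 1 + (if s = 0 then 1 else 0) := by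
  unfold tU
  by_cases h0 : s = 0
  · subst h0
    rw [if_pos ⟨le_refl 1, by norm_num, by push_cast; omega⟩,
      if_neg (by rintro ⟨-, h, -⟩; norm_num at h), if_pos rfl]
    simp
  · rw [if_neg h0]
    by_cases h1 : 1 ≤ s ∧ s ≤ (n:ℤ)
    · rw [if_pos ⟨le_refl 1, by push_cast; omega, by push_cast; omega⟩,
        if_pos ⟨le_refl 1, by push_cast; omega, by push_cast; omega⟩]
      simp
    · rw [if_neg (by rintro ⟨-, h2, h3⟩; push_cast at h2 h3; omega),
        if_neg (by rintro ⟨-, h2, h3⟩; push_cast at h2 h3; omega)]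

lemma I2b (n : ℕ) (s : ℤ) (k : ℕ) (hk2 : 2 ≤ k) :
    tU (n+1) s k = tU n (s-1) k + tT n s (k-1) := by
  obtain ⟨j, rfl⟩ : ∃ j, k = j + 2 := ⟨k - 2, by omega⟩
  unfold tU tT
  rw [show j + 2 - 1 = j + 1 from rfl, show j + 1 - 1 = j from rfl]
  by_cases hs : 1 - s ≤ (j:ℤ) + 2
  · by_cases hn : s + 2*((j:ℤ)+2) - 2 ≤ (n:ℤ)
    · by_cases hs2 : 2 - s ≤ (j:ℤ) + 2
      · rw [if_pos ⟨by omega, by push_cast; omega, by push_cast; omega⟩,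
          if_pos ⟨by omega, by push_cast; omega, by push_cast; omega⟩,
          if_pos ⟨by omega, by push_cast; omega, by push_cast; omega⟩]
        push_cast
        have hM : (s + 2*((j:ℤ)+2) - 2).toNat = ((s - 1) + 2*((j:ℤ)+2) - 2).toNat + 1 := by
          omega
        have hM2 : (2*((j:ℤ)+1) + s - 1).toNat = ((s - 1) + 2*((j:ℤ)+2) - 2).toNat := by omega
        have hA1 : ((n:ℤ) + 1 + 1 - s) = ((n:ℤ) + 1 - (s-1)) := by ring
        have hA2 : ((n:ℤ) - s).toNat - 2*(j+1) = ((n:ℤ) + 1 - (s-1)).toNat - 2*(j+2) := by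
          omega
        rw [hM, hM2, hA1, hA2, Nat.choose_succ_succ]
        ring
      · have hse : s = -(j:ℤ) - 1 := by omega
        rw [if_pos ⟨by omega, by push_cast; omega, by push_cast; omega⟩,
          if_neg (by rintro ⟨-, h, -⟩; push_cast at h; omega),
          if_pos ⟨by omega, by push_cast; omega, by push_cast; omega⟩]
        push_cast
        have e1 : (s + 2*((j:ℤ)+2) - 2).toNat = j + 1 := by omega
        have e2 : (2*((j:ℤ)+1) + s - 1).toNat = j := by omega
        have e3 : ((n:ℤ) + 1 + 1 - s).toNat - 2*(j+2) = ((n:ℤ) - s).toNat - 2*(j+1) := by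
          omega
        rw [e1, e2, e3, Nat.choose_self, Nat.choose_self]
        ring
    · rw [if_neg (by rintro ⟨-, -, h⟩; push_cast at h; omega),
        if_neg (by rintro ⟨-, -, h⟩; push_cast at h; omega),
        if_neg (by rintro ⟨-, -, h⟩; push_cast at h; omega)]
  · rw [if_neg (by rintro ⟨-, h, -⟩; push_cast at h; omega),
      if_neg (by rintro ⟨-, h, -⟩; push_cast at h; omega),
      if_neg (by rintro ⟨-, h, -⟩; push_cast at h; omega)]

def rhsT (n : ℕ) (s : ℤ) : ℕ := (if s = 0 then 1 else 0) + ∑ k ∈ Finset.Icc 1 n, tT n s k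
def rhsU (n : ℕ) (s : ℤ) : ℕ := ∑ k ∈ Finset.Icc 1 n, tU n s k

lemma sum_Icc_one (m : ℕ) (f : ℕ → ℕ) :
    ∑ k ∈ Finset.Icc 1 m, f k = ∑ i ∈ Finset.range m, f (i+1) := by
  induction m with
  | zero => simp
  | succ m ih => rw [Finset.sum_Icc_succ_top (by omega), ih, Finset.sum_range_succ]

lemma rhsT_rec (n : ℕ) (s : ℤ) : rhsT (n+1) s = rhsT n s + rhsU n (s+1) := by
  unfold rhsT rhsU
  have h : ∑ k ∈ Finset.Icc 1 (n+1), tT (n+1) s k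
      = ∑ k ∈ Finset.Icc 1 n, tT n s k + ∑ k ∈ Finset.Icc 1 n, tU n (s+1) k := by
    rw [Finset.sum_Icc_succ_top (by omega : 1 ≤ n+1)]
    simp_rw [I1]
    rw [Finset.sum_add_distrib, tT_vanish n s (n+1) (by omega),
      tU_vanish n (s+1) (n+1) (by omega)]
    omega
  rw [h]; ring

lemma rhsU_rec (n : ℕ) (s : ℤ) : rhsU (n+1) s = rhsT n s + rhsU n (s-1) := by
  unfold rhsT rhsU
  rw [sum_Icc_one, sum_Icc_one, sum_Icc_one]
  rw [Finset.sum_range_succ' (fun i => tU (n+1) s (i+1)) n]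
  have hI : ∀ i ∈ Finset.range n, tU (n+1) s (i+1+1) = tU n (s-1) (i+1+1) + tT n s (i+1) :=
    fun i _ => I2b n s (i+2) (by omega)
  rw [Finset.sum_congr rfl hI, Finset.sum_add_distrib, I2a]
  have h2 : ∑ i ∈ Finset.range n, tU n (s-1) (i+1+1) + tU n (s-1) (0+1)
      = ∑ i ∈ Finset.range (n+1), tU n (s-1) (i+1) :=
    (Finset.sum_range_succ' (fun i => tU n (s-1) (i+1)) n).symm
  rw [Finset.sum_range_succ] at h2
  rw [tU_vanish n (s-1) (n+1) (by omega)] at h2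
  simp only [Nat.zero_add] at h2 ⊢
  omega

lemma tT_one (s : ℤ) : tT 1 s 1 = 0 := by
  unfold tT
  split_ifs with h
  · have e : (((1:ℕ):ℤ) - s).toNat - 2*1 < 1 := by omega
    rw [Nat.choose_eq_zero_of_lt e, mul_zero]
  · rfl

lemma rhsT_one (s : ℤ) : rhsT 1 s = if s = 0 then 1 else 0 := by
  unfold rhsT
  rw [Finset.Icc_self, Finset.sum_singleton, tT_one, add_zero]

lemma rhsU_one (s : ℤ) : rhsU 1 s = if s = 0 then 1 else 0 := by
  unfold rhsU tU
  rw [Finset.Icc_self, Finset.sum_singleton]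
  by_cases h0 : s = 0
  · subst h0
    rw [if_pos ⟨le_refl 1, by omega, by omega⟩, if_pos rfl]
    simp
  · rw [if_neg (by rintro ⟨-, h2, h3⟩; push_cast at h2 h3; omega), if_neg h0]

lemma sum_eq (n : ℕ) (s : ℤ) :
    ∑ k ∈ Finset.Icc (max 1 (-s).toNat) (((n : ℤ) - s).toNat / 3),
        Nat.choose (2 * (k : ℤ) + s - 1).toNat (k - 1) *
          Nat.choose (((n : ℤ) - s).toNat - 2 * k) k
    = ∑ k ∈ Finset.Icc 1 n, tT n s k := by
  have h1 : ∀ k ∈ Finset.Icc (max 1 (-s).toNat) (((n : ℤ) - s).toNat / 3),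
      Nat.choose (2 * (k : ℤ) + s - 1).toNat (k - 1) *
        Nat.choose (((n : ℤ) - s).toNat - 2 * k) k = tT n s k := by
    intro k hk
    simp only [Finset.mem_Icc] at hk
    unfold tT
    rw [if_pos ⟨by omega, by omega, by omega⟩]
  rw [Finset.sum_congr rfl h1]
  apply Finset.sum_subset
  · intro k hk
    simp only [Finset.mem_Icc] at hk ⊢
    omega
  · intro k hk hnk
    simp only [Finset.mem_Icc] at hk hnk
    push_neg at hnk
    unfold tT
    split_ifs with h
    · obtain ⟨hk1, hk2, hk3⟩ := h
      have hlt : ((n:ℤ) - s).toNat - 2*k < k := by omega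
      rw [Nat.choose_eq_zero_of_lt hlt, mul_zero]
    · rfl

lemma main_both : ∀ n, 1 ≤ n → ∀ s : ℤ, Tcnt n s = rhsT n s ∧ Ucnt n s = rhsU n s := by
  intro n hn
  induction n, hn using Nat.le_induction with
  | base => exact fun s => ⟨(Tcnt_one s).trans (rhsT_one s).symm,
      (Ucnt_one s).trans (rhsU_one s).symm⟩
  | succ n hn ih =>
    intro s
    obtain ⟨m, rfl⟩ : ∃ m, n = m + 1 := ⟨n - 1, by omega⟩
    constructor
    · rw [Tcnt_rec, (ih s).1, (ih (s+1)).2, rhsT_rec (m+1) s]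
    · rw [Ucnt_rec, (ih s).1, (ih (s-1)).2, rhsU_rec (m+1) s]

/-- Theorem 2, formula (4.3): for `n ≥ 1` and integer `s` with
`−⌊n/2⌋ ≤ s ≤ max(0, n−3)`,
`T_s(n) = [s = 0] + ∑_{k = max(1,−s)}^{⌊(n−s)/3⌋} C(2k+s−1, k−1) · C(n−s−2k, k)`. -/
theorem T_formula (n : ℕ) (hn : 1 ≤ n) (s : ℤ)
    (hs1 : -((n / 2 : ℕ) : ℤ) ≤ s) (hs2 : s ≤ max 0 ((n : ℤ) - 3)) :
    Tcnt n s = (if s = 0 then 1 else 0) +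
      ∑ k ∈ Finset.Icc (max 1 (-s).toNat) (((n : ℤ) - s).toNat / 3),
        Nat.choose (2 * (k : ℤ) + s - 1).toNat (k - 1) *
          Nat.choose (((n : ℤ) - s).toNat - 2 * k) k := by
  rw [(main_both n hn s).1]
  unfold rhsT
  rw [sum_eq]
end

section
/- Let n ≥ 1 and let s be an integer with s < −⌊n/2⌋ or s > max(0, n−3). Then T_s(n) = 0; that is, no binary n-sequence ending in 0 has score s outside the range −⌊n/2⌋ ≤ s ≤ max(0, n−3). -/
lemma score_bounds (n : ℕ) (x : Fin n → Bool)
    (hend : ∀ i : Fin n, (i : ℕ) = n - 1 → x i = false) :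
    -((n / 2 : ℕ) : ℤ) ≤ scoreSeq n x ∧ scoreSeq n x ≤ max 0 ((n : ℤ) - 3) := by
  classical
  set F1 := (Finset.univ.filter fun i : Fin (n - 1) =>
      x ⟨i.val, by have := i.isLt; omega⟩ = true ∧
      x ⟨i.val + 1, by have := i.isLt; omega⟩ = true) with hF1
  set F0 := (Finset.univ.filter fun i : Fin (n - 1) =>
      x ⟨i.val, by have := i.isLt; omega⟩ = true ∧
      x ⟨i.val + 1, by have := i.isLt; omega⟩ = false) with hF0
  have hscore : scoreSeq n x = (F1.card : ℤ) - F0.card := rfl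
  -- B ≤ n/2
  have hB : F0.card ≤ n / 2 := by
    have hmap : ∀ i ∈ F0, i.val / 2 ∈ Finset.range (n / 2) := by
      intro i hi
      have := i.isLt
      simp only [Finset.mem_range]
      omega
    have hinj : ∀ i ∈ F0, ∀ j ∈ F0, i.val / 2 = j.val / 2 → i = j := by
      intro i hi j hj hij
      by_contra hne
      have hivne : i.val ≠ j.val := fun h => hne (Fin.ext h)
      simp only [hF0, Finset.mem_filter] at hi hj
      -- spacing: WLOG i < j, then j ≠ i+1
      rcases lt_or_gt_of_ne hivne with h | h
      · have hj1 : j.val ≠ i.val + 1 := by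
          intro hconsec
          have h1 : x ⟨i.val + 1, by have := i.isLt; omega⟩ = false := hi.2.2
          have h2 : x ⟨j.val, by have := j.isLt; omega⟩ = true := hj.2.1
          rw [show (⟨j.val, by have := j.isLt; omega⟩ : Fin n)
              = ⟨i.val + 1, by have := i.isLt; omega⟩ from Fin.ext hconsec] at h2
          rw [h1] at h2; exact Bool.false_ne_true h2
        omega
      · have hi1 : i.val ≠ j.val + 1 := by
          intro hconsec
          have h1 : x ⟨j.val + 1, by have := j.isLt; omega⟩ = false := hj.2.2
          have h2 : x ⟨i.val, by have := i.isLt; omega⟩ = true := hi.2.1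
          rw [show (⟨i.val, by have := i.isLt; omega⟩ : Fin n)
              = ⟨j.val + 1, by have := j.isLt; omega⟩ from Fin.ext hconsec] at h2
          rw [h1] at h2; exact Bool.false_ne_true h2
        omega
    calc F0.card ≤ (Finset.range (n / 2)).card :=
          Finset.card_le_card_of_injOn _ hmap hinj
      _ = n / 2 := Finset.card_range _
  constructor
  · rw [hscore]
    have : (F0.card : ℤ) ≤ ((n / 2 : ℕ) : ℤ) := by exact_mod_cast hB
    have h0 : (0 : ℤ) ≤ F1.card := Int.natCast_nonneg _
    linarith
  · by_cases hA : F1 = ∅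
    · rw [hscore, hA]
      simp only [Finset.card_empty, Nat.cast_zero, zero_sub]
      have : (0 : ℤ) ≤ F0.card := Int.natCast_nonneg _
      have := le_max_left (0 : ℤ) ((n : ℤ) - 3)
      linarith
    · obtain ⟨i0, hi0⟩ := Finset.nonempty_iff_ne_empty.mpr hA
      have hn2 : 2 ≤ n := by have := i0.isLt; omega
      simp only [hF1, Finset.mem_filter] at hi0
      -- the set of positions with a 1
      set S := (Finset.univ.filter fun i : Fin (n - 1) =>
          x ⟨i.val, by have := i.isLt; omega⟩ = true) with hS
      have hSne : S.Nonempty := ⟨i0, by simp [hS, hi0.2.1]⟩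
      set j := S.max' hSne with hj
      have hjS : j ∈ S := S.max'_mem hSne
      simp only [hS, Finset.mem_filter] at hjS
      have hjlt := j.isLt
      have hnext : x ⟨j.val + 1, by omega⟩ = false := by
        by_cases hlast : j.val + 1 = n - 1
        · exact hend ⟨j.val + 1, by omega⟩ hlast
        · have hlt : j.val + 1 < n - 1 := by omega
          cases hxy : x ⟨j.val + 1, by omega⟩ with
          | false => rfl
          | true =>
            have hmem : (⟨j.val + 1, hlt⟩ : Fin (n - 1)) ∈ S := by
              simp only [hS, Finset.mem_filter]
              exact ⟨Finset.mem_univ _, hxy⟩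
            have := S.le_max' _ hmem
            rw [← hj] at this
            have : j.val + 1 ≤ j.val := this
            omega
      have hjF0 : j ∈ F0 := by
        simp only [hF0, Finset.mem_filter]
        exact ⟨Finset.mem_univ _, hjS.2, hnext⟩
      have hF0pos : 1 ≤ F0.card := Finset.card_pos.mpr ⟨j, hjF0⟩
      have hdisj : Disjoint F1 F0 := by
        rw [Finset.disjoint_left]
        intro a h1 h0
        simp only [hF1, Finset.mem_filter] at h1
        simp only [hF0, Finset.mem_filter] at h0
        rw [h1.2.2] at h0
        exact Bool.noConfusion h0.2.2
      have hsum : F1.card + F0.card ≤ n - 1 := by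
        calc F1.card + F0.card = (F1 ∪ F0).card :=
              (Finset.card_union_of_disjoint hdisj).symm
          _ ≤ (Finset.univ : Finset (Fin (n - 1))).card := Finset.card_le_card (Finset.subset_univ _)
          _ = n - 1 := by simp
      rw [hscore]
      have := le_max_right (0 : ℤ) ((n : ℤ) - 3)
      have h1 : (F1.card : ℤ) - F0.card ≤ (n : ℤ) - 3 := by
        have := hsum
        omega
      linarith

/-- Theorem 2: for `n ≥ 1`, `T_s(n) = 0` for `s` outside the range
`−⌊n/2⌋ ≤ s ≤ max(0, n−3)`. -/
theorem T_eq_zero (n : ℕ) (hn : 1 ≤ n) (s : ℤ)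
    (hs : s < -((n / 2 : ℕ) : ℤ) ∨ max 0 ((n : ℤ) - 3) < s) :
    Tcnt n s = 0 := by
  rw [Tcnt, Finset.card_eq_zero, Finset.filter_eq_empty_iff]
  rintro x - ⟨hend, hsc⟩
  obtain ⟨h1, h2⟩ := score_bounds n x hend
  rw [hsc] at h1 h2
  rcases hs with h | h
  · linarith
  · linarith
end

section
/- For every binary sequence x of length n ≥ 1, the score satisfies −⌊n/2⌋ ≤ S(x) ≤ n−1; moreover if x ends in 1 then S(x) ≥ −⌊(n−1)/2⌋. -/
private def term (a b : Bool) : ℤ := if a then (if b then 1 else -1) else 0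

private lemma key_s14 (g : ℕ → Bool) (m : ℕ) :
    -(((m + 1) / 2 : ℕ) : ℤ) ≤ ∑ i ∈ Finset.range m, term (g i) (g (i+1)) ∧
    (∑ i ∈ Finset.range m, term (g i) (g (i+1))) ≤ (m : ℤ) ∧
    (g m = true → -((m / 2 : ℕ) : ℤ) ≤ ∑ i ∈ Finset.range m, term (g i) (g (i+1))) := by
  induction m with
  | zero => simp [term]
  | succ m ih =>
    obtain ⟨h1, h2, h3⟩ := ih
    rw [Finset.sum_range_succ]
    set S := ∑ i ∈ Finset.range m, term (g i) (g (i+1)) with hS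
    clear_value S
    have hc1 : (((m+1+1)/2 : ℕ) : ℤ) = ((m+1)/2 : ℕ) + 1 ∨
        (((m+1+1)/2 : ℕ) : ℤ) = ((m+1)/2 : ℕ) := by push_cast [Nat.succ_div]; omega
    have hc2 : ((m/2 : ℕ) : ℤ) ≤ ((m+1+1)/2 : ℕ) := by push_cast; omega
    have hc3 : ((m/2 : ℕ) : ℤ) - 1 ≤ ((m+1)/2 : ℕ) := by push_cast; omega
    have hc4 : ((m/2 : ℕ) : ℤ) + 1 ≥ ((m+1+1)/2 : ℕ) := by push_cast; omega
    cases hm : g m <;> cases hm1 : g (m+1) <;>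
      simp only [term, hm, hm1, if_true, if_false, Bool.false_eq_true,
        forall_true_left, Bool.true_eq_false, IsEmpty.forall_iff] at h3 ⊢ <;>
      push_cast <;>
      refine ⟨?_, ?_, ?_⟩ <;> first | omega | trivial

/-- For every binary sequence `x` of length `n ≥ 1`, the score satisfies
`−⌊n/2⌋ ≤ S(x) ≤ n−1`; moreover if `x` ends in 1 then `S(x) ≥ −⌊(n−1)/2⌋`. -/
theorem score_range (n : ℕ) (hn : 1 ≤ n) (x : Fin n → Bool) :
    -((n / 2 : ℕ) : ℤ) ≤ scoreSeq n x ∧ scoreSeq n x ≤ (n : ℤ) - 1 ∧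
      (x ⟨n - 1, by omega⟩ = true → -(((n - 1) / 2 : ℕ) : ℤ) ≤ scoreSeq n x) := by
  set g : ℕ → Bool := fun i => if h : i < n then x ⟨i, h⟩ else false with hg
  have hsc : scoreSeq n x = ∑ i ∈ Finset.range (n-1), term (g i) (g (i+1)) := by
    unfold scoreSeq
    rw [Finset.card_filter, Finset.card_filter]
    push_cast
    rw [← Finset.sum_sub_distrib]
    have := Fin.sum_univ_eq_sum_range (fun i => term (g i) (g (i+1))) (n-1)
    rw [← this]
    refine Finset.sum_congr rfl fun i _ => ?_
    have h1 : (i : ℕ) < n := by have := i.isLt; omega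
    have h2 : (i : ℕ) + 1 < n := by have := i.isLt; omega
    simp only [hg, term, dif_pos h1, dif_pos h2]
    cases x ⟨i, h1⟩ <;> cases x ⟨(i : ℕ)+1, h2⟩ <;> simp
  obtain ⟨h1, h2, h3⟩ := key_s14 g (n-1)
  have hn1 : n - 1 + 1 = n := by omega
  rw [hn1] at h1
  refine ⟨by rw [hsc]; exact h1, by rw [hsc]; omega, fun hx => ?_⟩
  rw [hsc]
  apply h3
  simp only [hg, dif_pos (show n - 1 < n by omega), hx]
end
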